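/- There exists a constant C > 0 such that for every n ≥ 1 and all x, y ∈ ℝⁿ×ℝⁿ, ‖x + y‖_{Z_2^n} ≤ C·(‖x‖_{Z_2^n} + ‖y‖_{Z_2^n}); that is, ‖·‖_{Z_2^n} is a quasi-norm with quasi-triangle constant independent of n. -/

import Mathlib

open scoped BigOperators

/-- The Euclidean norm on `ℝⁿ`. -/
noncomputable def l2 {n : ℕ} (b : Fin n → ℝ) : ℝ := Real.sqrt (∑ j, b j ^ 2)

/-- The Kalton–Peck map `F(b)_j = b_j log(|b_j|/‖b‖₂)`, with `F(b)_j = 0` when `b_j = 0`. -/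
noncomputable def KPF {n : ℕ} (b : Fin n → ℝ) : Fin n → ℝ :=
  fun j => if b j = 0 then 0 else b j * Real.log (|b j| / l2 b)

/-- The Kalton–Peck quasi-norm `‖(a,b)‖ = ‖b‖₂ + ‖a - F(b)‖₂` on `ℝⁿ × ℝⁿ`. -/
noncomputable def znorm {n : ℕ} (x : (Fin n → ℝ) × (Fin n → ℝ)) : ℝ :=
  l2 x.2 + l2 (x.1 - KPF x.2)

/-- Operator "norm" `sup_{x ≠ 0} N_W(T x) / N_V(x)` of a map `T` between spaces
equipped with (quasi-)norms `N_V`, `N_W`. -/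
noncomputable def ratioSup {V W : Type*} [Zero V] (NV : V → ℝ) (NW : W → ℝ) (T : V → W) : ℝ :=
  ⨆ x : {x : V // x ≠ 0}, NW (T x.1) / NV x.1

/-! ### Auxiliary lemmas about `l2` -/

lemma l2_eq {n : ℕ} (b : Fin n → ℝ) : l2 b = ‖(WithLp.equiv 2 (Fin n → ℝ)).symm b‖ := by
  rw [EuclideanSpace.norm_eq]; simp [l2, sq_abs]

lemma l2_nonneg {n : ℕ} (b : Fin n → ℝ) : 0 ≤ l2 b := Real.sqrt_nonneg _

lemma l2_zero {n : ℕ} : l2 (0 : Fin n → ℝ) = 0 := by simp [l2]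

lemma l2_pos {n : ℕ} {b : Fin n → ℝ} (hb : b ≠ 0) : 0 < l2 b := by
  rw [l2_eq]
  have : (WithLp.equiv 2 (Fin n → ℝ)).symm b ≠ 0 := by
    simpa using (WithLp.equiv 2 (Fin n → ℝ)).symm.injective.ne_iff.2
      (show b ≠ (WithLp.equiv 2 (Fin n → ℝ)) 0 by simpa using hb)
  exact norm_pos_iff.2 this

lemma l2_add_le {n : ℕ} (f g : Fin n → ℝ) : l2 (f + g) ≤ l2 f + l2 g := by
  simp only [l2_eq]
  rw [show (WithLp.equiv 2 (Fin n → ℝ)).symm (f + g)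
      = (WithLp.equiv 2 (Fin n → ℝ)).symm f + (WithLp.equiv 2 (Fin n → ℝ)).symm g from rfl]
  exact norm_add_le _ _

lemma l2_neg {n : ℕ} (f : Fin n → ℝ) : l2 (-f) = l2 f := by simp [l2]

lemma l2_sub_le {n : ℕ} (f g : Fin n → ℝ) : l2 (f - g) ≤ l2 f + l2 g := by
  rw [sub_eq_add_neg]
  calc l2 (f + -g) ≤ l2 f + l2 (-g) := l2_add_le _ _
  _ = l2 f + l2 g := by rw [l2_neg]

lemma l2_smul {n : ℕ} (c : ℝ) (f : Fin n → ℝ) : l2 (c • f) = |c| * l2 f := by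
  simp only [l2_eq]
  rw [show (WithLp.equiv 2 (Fin n → ℝ)).symm (c • f)
      = c • (WithLp.equiv 2 (Fin n → ℝ)).symm f from rfl]
  rw [norm_smul, Real.norm_eq_abs]

lemma l2_mono {n : ℕ} {f g : Fin n → ℝ} (h : ∀ j, |f j| ≤ g j) : l2 f ≤ l2 g := by
  apply Real.sqrt_le_sqrt
  apply Finset.sum_le_sum
  intro j _
  calc f j ^ 2 = |f j| ^ 2 := (sq_abs _).symm
  _ ≤ g j ^ 2 := by
      have := h j
      have := abs_nonneg (f j)
      nlinarith

lemma l2_abs_add {n : ℕ} (f g : Fin n → ℝ) :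
    l2 (fun j => |f j| + |g j|) ≤ l2 f + l2 g := by
  have h1 : l2 (fun j => |f j|) = l2 f := by simp [l2, sq_abs]
  have h2 : l2 (fun j => |g j|) = l2 g := by simp [l2, sq_abs]
  calc l2 (fun j => |f j| + |g j|)
      = l2 ((fun j => |f j|) + (fun j => |g j|)) := rfl
  _ ≤ l2 (fun j => |f j|) + l2 (fun j => |g j|) := l2_add_le _ _
  _ = l2 f + l2 g := by rw [h1, h2]

/-! ### The scalar function `φ(x) = x log |x|` -/

noncomputable def phi (x : ℝ) : ℝ := x * Real.log |x|

lemma phi_zero : phi 0 = 0 := by simp [phi]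

lemma phi_neg (x : ℝ) : phi (-x) = -phi x := by simp [phi]

lemma abs_phi_le_one {z : ℝ} (hz : |z| ≤ 1) : |phi z| ≤ 1 := by
  rcases eq_or_ne z 0 with h | h
  · simp [h, phi]
  · have h0 : 0 < |z| := abs_pos.2 h
    have hlog : Real.log |z| ≤ 0 := Real.log_nonpos (abs_nonneg z) hz
    have hsub : Real.log (1 / |z|) ≤ 1 / |z| - 1 :=
      Real.log_le_sub_one_of_pos (by positivity)
    rw [Real.log_div one_ne_zero (ne_of_gt h0), Real.log_one, zero_sub] at hsub
    have hmul : (-Real.log |z|) * |z| ≤ (1 / |z| - 1) * |z| :=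
      mul_le_mul_of_nonneg_right hsub (abs_nonneg z)
    have h1 : (1 / |z| - 1) * |z| = 1 - |z| := by field_simp
    rw [h1] at hmul
    have : |phi z| = |z| * (-Real.log |z|) := by
      rw [phi, abs_mul, abs_of_nonpos hlog]
    rw [this]
    nlinarith

lemma phi_mul (σ x : ℝ) (hσ : 0 < σ) : phi (σ * x) = σ * phi x + σ * x * Real.log σ := by
  rcases eq_or_ne x 0 with h | h
  · simp [h, phi]
  · unfold phi
    rw [abs_mul, abs_of_pos hσ, Real.log_mul (ne_of_gt hσ) (abs_ne_zero.2 h)]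
    ring

lemma phi_quasi (x y : ℝ) : |phi (x + y) - phi x - phi y| ≤ 3 * (|x| + |y|) := by
  rcases eq_or_ne x 0 with hx | hx
  · simp [hx, phi_zero]
  rcases eq_or_ne y 0 with hy | hy
  · simp [hy, phi_zero]
  set σ := |x| + |y| with hσdef
  have hσ : 0 < σ := by positivity
  set X := x / σ with hX
  set Y := y / σ with hY
  have hxX : x = σ * X := by rw [hX, mul_div_cancel₀ _ (ne_of_gt hσ)]
  have hyY : y = σ * Y := by rw [hY, mul_div_cancel₀ _ (ne_of_gt hσ)]
  have hXY : x + y = σ * (X + Y) := by rw [hxX, hyY]; ring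
  have key : phi (x + y) - phi x - phi y = σ * (phi (X + Y) - phi X - phi Y) := by
    rw [hXY, hxX, hyY, phi_mul _ _ hσ, phi_mul _ _ hσ, phi_mul _ _ hσ]
    ring
  have hXa : |X| ≤ 1 := by
    rw [hX, abs_div, abs_of_pos hσ, div_le_one hσ]
    simp [hσdef, abs_nonneg]
  have hYa : |Y| ≤ 1 := by
    rw [hY, abs_div, abs_of_pos hσ, div_le_one hσ]
    simp [hσdef, abs_nonneg]
  have hXYa : |X + Y| ≤ 1 := by
    rw [hX, hY, ← add_div, abs_div, abs_of_pos hσ, div_le_one hσ]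
    exact abs_add_le _ _
  have b1 := abs_phi_le_one hXYa
  have b2 := abs_phi_le_one hXa
  have b3 := abs_phi_le_one hYa
  rw [key, abs_mul, abs_of_pos hσ]
  have : |phi (X + Y) - phi X - phi Y| ≤ 3 := by
    calc |phi (X + Y) - phi X - phi Y| ≤ |phi (X + Y)| + |phi X| + |phi Y| := by
          exact (abs_sub _ _).trans (by linarith [abs_sub (phi (X+Y)) (phi X), abs_add_le (phi (X+Y)) (phi X)])
    _ ≤ 3 := by linarith
  nlinarith

/-! ### Decomposition of the Kalton–Peck map -/

lemma KPF_apply_eq {n : ℕ} (b : Fin n → ℝ) (hb : b ≠ 0) (M : ℝ) (hM : 0 < M) (j : Fin n) :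
    KPF b j = M * phi (b j / M) + Real.log (M / l2 b) * b j := by
  have hs : 0 < l2 b := l2_pos hb
  rcases eq_or_ne (b j) 0 with h | h
  · simp [KPF, h, phi_zero]
  · have habs : 0 < |b j| := abs_pos.2 h
    rw [KPF]
    simp only [h, if_false]
    have h1 : phi (b j / M) = (b j / M) * Real.log (|b j| / M) := by
      rw [phi, abs_div, abs_of_pos hM]
    rw [h1, Real.log_div (ne_of_gt habs) (ne_of_gt hs),
        Real.log_div (ne_of_gt habs) (ne_of_gt hM),
        Real.log_div (ne_of_gt hM) (ne_of_gt hs)]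
    field_simp
    ring

lemma log_ratio_mul_le {M v : ℝ} (hv : 0 < v) (hvM : v ≤ M) :
    |Real.log (M / v)| * v ≤ M := by
  have hM : 0 < M := lt_of_lt_of_le hv hvM
  have h1 : 1 ≤ M / v := (one_le_div hv).2 hvM
  have hnn : 0 ≤ Real.log (M / v) := Real.log_nonneg h1
  rw [abs_of_nonneg hnn]
  have h2 : Real.log (M / v) ≤ M / v - 1 := Real.log_le_sub_one_of_pos (by positivity)
  have h3 : Real.log (M / v) * v ≤ (M / v - 1) * v := mul_le_mul_of_nonneg_right h2 (le_of_lt hv)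
  have h4 : (M / v - 1) * v = M - v := by field_simp
  linarith [h3, h4 ▸ h3]

lemma KPF_zero {n : ℕ} : KPF (0 : Fin n → ℝ) = 0 := by
  funext j; simp [KPF]

lemma KPF_neg {n : ℕ} (b : Fin n → ℝ) : KPF (-b) = -KPF b := by
  funext j
  simp only [KPF, Pi.neg_apply, neg_eq_zero]
  rcases eq_or_ne (b j) 0 with h | h
  · simp [h]
  · have : l2 (-b) = l2 b := l2_neg b
    simp [h, this, abs_neg]

/-- Quasi-additivity of the Kalton–Peck map with dimension-free constant. -/
lemma KPF_quasi {n : ℕ} (b c : Fin n → ℝ) :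
    l2 (KPF (b + c) - KPF b - KPF c) ≤ 6 * (l2 b + l2 c) := by
  rcases eq_or_ne b 0 with hb | hb
  · simp only [hb, zero_add, KPF_zero, sub_zero, l2_zero]
    rw [show KPF c - KPF c = 0 from sub_self _, l2_zero]
    have := l2_nonneg c
    linarith
  rcases eq_or_ne c 0 with hc | hc
  · simp only [hc, add_zero, KPF_zero, sub_zero, l2_zero]
    rw [sub_self, l2_zero]
    have := l2_nonneg b
    linarith
  rcases eq_or_ne (b + c) 0 with hbc | hbc
  · have hc' : c = -b := by
      have := hbc
      linear_combination (norm := module) this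
    rw [hbc, hc', KPF_zero, KPF_neg, show (0 : Fin n → ℝ) - KPF b - -KPF b = 0 by abel,
      l2_zero, l2_neg]
    have := l2_nonneg b
    linarith
  set s := l2 b with hs'
  set t := l2 c with ht'
  set u := l2 (b + c) with hu'
  have hs : 0 < s := l2_pos hb
  have ht : 0 < t := l2_pos hc
  have hu : 0 < u := l2_pos hbc
  set M := s + t with hM'
  have hM : 0 < M := by positivity
  have huM : u ≤ M := l2_add_le b c
  -- Decomposition
  set Ψ : Fin n → ℝ := fun j => M * (phi ((b j + c j) / M) - phi (b j / M) - phi (c j / M))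
    with hΨ
  have hdecomp : KPF (b + c) - KPF b - KPF c
      = Ψ + (Real.log (M / u)) • (b + c) - (Real.log (M / s)) • b - (Real.log (M / t)) • c := by
    funext j
    simp only [Pi.sub_apply, Pi.add_apply, Pi.smul_apply, smul_eq_mul, hΨ]
    rw [KPF_apply_eq (b + c) hbc M hM j, KPF_apply_eq b hb M hM j, KPF_apply_eq c hc M hM j]
    simp only [Pi.add_apply, ← hu', ← hs', ← ht']
    ring
  -- Bound each piece
  have hΨbound : l2 Ψ ≤ 3 * (s + t) := by
    have hpt : ∀ j, |Ψ j| ≤ 3 * |b j| + 3 * |c j| := by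
      intro j
      have h1 : (b j + c j) / M = b j / M + c j / M := add_div _ _ _
      have h2 := phi_quasi (b j / M) (c j / M)
      rw [hΨ]
      simp only []
      rw [h1, abs_mul, abs_of_pos hM]
      calc M * |phi (b j / M + c j / M) - phi (b j / M) - phi (c j / M)|
          ≤ M * (3 * (|b j / M| + |c j / M|)) := by
            exact mul_le_mul_of_nonneg_left h2 (le_of_lt hM)
      _ = 3 * |b j| + 3 * |c j| := by
            rw [abs_div, abs_div, abs_of_pos hM]
            field_simp
    have := l2_mono (g := fun j => 3 * |b j| + 3 * |c j|) hpt
    calc l2 Ψ ≤ l2 (fun j => 3 * |b j| + 3 * |c j|) := this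
    _ = l2 ((3 : ℝ) • (fun j => |b j| + |c j|)) := by
        congr 1; funext j; simp [mul_add]
    _ = 3 * l2 (fun j => |b j| + |c j|) := by
        rw [l2_smul]; norm_num
    _ ≤ 3 * (l2 b + l2 c) := by
        have := l2_abs_add b c
        nlinarith [l2_nonneg (fun j => |b j| + |c j|)]
    _ = 3 * (s + t) := rfl
  have hu2 : l2 ((Real.log (M / u)) • (b + c)) ≤ M := by
    rw [l2_smul, ← hu']
    exact log_ratio_mul_le hu huM
  have hs2 : l2 ((Real.log (M / s)) • b) ≤ M := by
    rw [l2_smul, ← hs']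
    exact log_ratio_mul_le hs (by linarith)
  have ht2 : l2 ((Real.log (M / t)) • c) ≤ M := by
    rw [l2_smul, ← ht']
    exact log_ratio_mul_le ht (by linarith)
  rw [hdecomp]
  calc l2 (Ψ + (Real.log (M / u)) • (b + c) - (Real.log (M / s)) • b - (Real.log (M / t)) • c)
      ≤ l2 (Ψ + (Real.log (M / u)) • (b + c) - (Real.log (M / s)) • b)
        + l2 ((Real.log (M / t)) • c) := l2_sub_le _ _
  _ ≤ l2 (Ψ + (Real.log (M / u)) • (b + c)) + l2 ((Real.log (M / s)) • b)
        + l2 ((Real.log (M / t)) • c) := by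
        linarith [l2_sub_le (Ψ + (Real.log (M / u)) • (b + c)) ((Real.log (M / s)) • b)]
  _ ≤ l2 Ψ + l2 ((Real.log (M / u)) • (b + c)) + l2 ((Real.log (M / s)) • b)
        + l2 ((Real.log (M / t)) • c) := by
        linarith [l2_add_le Ψ ((Real.log (M / u)) • (b + c))]
  _ ≤ 3 * (s + t) + M + M + M := by linarith
  _ = 6 * (l2 b + l2 c) := by rw [hM']; ring

/-- The Kalton–Peck quasi-norm satisfies a quasi-triangle inequality with constant
independent of the dimension. -/
theorem znorm_is_quasinorm :
    ∃ C : ℝ, 0 < C ∧ ∀ n : ℕ, 1 ≤ n → ∀ x y : (Fin n → ℝ) × (Fin n → ℝ),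
      znorm (x + y) ≤ C * (znorm x + znorm y) := by
  refine ⟨7, by norm_num, fun n _ x y => ?_⟩
  obtain ⟨a, b⟩ := x
  obtain ⟨a', b'⟩ := y
  simp only [znorm, Prod.fst_add, Prod.snd_add]
  have h1 : l2 (b + b') ≤ l2 b + l2 b' := l2_add_le b b'
  have h2 : a + a' - KPF (b + b')
      = ((a - KPF b) + (a' - KPF b')) - (KPF (b + b') - KPF b - KPF b') := by
    abel
  have h3 : l2 (a + a' - KPF (b + b'))
      ≤ l2 (a - KPF b) + l2 (a' - KPF b') + 6 * (l2 b + l2 b') := by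
    rw [h2]
    calc l2 (((a - KPF b) + (a' - KPF b')) - (KPF (b + b') - KPF b - KPF b'))
        ≤ l2 ((a - KPF b) + (a' - KPF b')) + l2 (KPF (b + b') - KPF b - KPF b') :=
          l2_sub_le _ _
    _ ≤ l2 (a - KPF b) + l2 (a' - KPF b') + 6 * (l2 b + l2 b') := by
          linarith [l2_add_le (a - KPF b) (a' - KPF b'), KPF_quasi b b']
  have n1 := l2_nonneg b
  have n2 := l2_nonneg b'
  have n3 := l2_nonneg (a - KPF b)
  have n4 := l2_nonneg (a' - KPF b')
  linarith
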